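/- (Completeness of JD_CS for D-arbitrary subset models) Let CS be an arbitrary constant specification for JD. For every formula F, if F is D-arbitrary CS-valid then JD_CS ⊢ F. -/

import Mathlib

/-- Justification terms: constants, variables, application, sum, bang. -/
inductive Tm : Type
  | const : Nat → Tm
  | var   : Nat → Tm
  | app   : Tm → Tm → Tm
  | sum   : Tm → Tm → Tm
  | bang  : Tm → Tm

/-- Formulas of justification logic. -/
inductive Fm : Type
  | prop : Nat → Fm
  | bot  : Fm
  | imp  : Fm → Fm → Fm
  | just : Tm → Fm → Fm

/-- ¬A := A → ⊥ -/
def Fm.neg (A : Fm) : Fm := Fm.imp A Fm.bot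
/-- ⊤ := ¬⊥ -/
def Fm.top : Fm := Fm.neg Fm.bot
/-- A ∨ B := ¬A → B -/
def Fm.disj (A B : Fm) : Fm := Fm.imp (Fm.neg A) B
/-- A ∧ B := ¬(A → ¬B) -/
def Fm.conj (A B : Fm) : Fm := Fm.neg (Fm.imp A (Fm.neg B))

/-- A classical propositional tautology in this language: true under every
Boolean valuation that respects ⊥ and →, treating `t:F` and atoms as arbitrary atoms. -/
def IsTaut (A : Fm) : Prop :=
  ∀ v : Fm → Bool,
    v Fm.bot = false →
    (∀ F G : Fm, v (Fm.imp F G) = (!(v F) || v G)) →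
    v A = true

/-- !^n t -/
def bangIter : Nat → Tm → Tm
  | 0, t => t
  | n + 1, t => Tm.bang (bangIter n t)

/-- `anFm n c A` is the formula !^n c : !^{n-1} c : ... : !c : c : A. -/
def anFm : Nat → Tm → Fm → Fm
  | 0, c, A => Fm.just c A
  | n + 1, c, A => Fm.just (bangIter (n + 1) c) (anFm n c A)

/-- Axioms of JD: classical tautologies, j+, j, jd. -/
inductive JDAxiom : Fm → Prop
  | cl {A : Fm} : IsTaut A → JDAxiom A
  | jplus (s t : Tm) (A : Fm) :
      JDAxiom (Fm.imp (Fm.disj (Fm.just s A) (Fm.just t A)) (Fm.just (Tm.sum s t) A))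
  | j (s t : Tm) (A B : Fm) :
      JDAxiom (Fm.imp (Fm.just s (Fm.imp A B)) (Fm.imp (Fm.just t A) (Fm.just (Tm.app s t) B)))
  | jd (t : Tm) : JDAxiom (Fm.neg (Fm.just t Fm.bot))

/-- Axioms of JNoC: classical tautologies, j+, j, noc. -/
inductive JNoCAxiom : Fm → Prop
  | cl {A : Fm} : IsTaut A → JNoCAxiom A
  | jplus (s t : Tm) (A : Fm) :
      JNoCAxiom (Fm.imp (Fm.disj (Fm.just s A) (Fm.just t A)) (Fm.just (Tm.sum s t) A))
  | j (s t : Tm) (A B : Fm) :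
      JNoCAxiom (Fm.imp (Fm.just s (Fm.imp A B)) (Fm.imp (Fm.just t A) (Fm.just (Tm.app s t) B)))
  | noc (t : Tm) (A : Fm) :
      JNoCAxiom (Fm.neg (Fm.conj (Fm.just t A) (Fm.just t (Fm.neg A))))

/-- A constant specification for the logic with axioms `Ax`: a set of pairs (c, A)
where c is (the index of) a constant and A is an axiom. -/
def IsConstSpec (Ax : Fm → Prop) (CS : Set (Nat × Fm)) : Prop :=
  ∀ p ∈ CS, Ax p.2

/-- CS is axiomatically appropriate: every axiom is justified by some constant. -/
def AxAppropriate (Ax : Fm → Prop) (CS : Set (Nat × Fm)) : Prop :=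
  ∀ A : Fm, Ax A → ∃ c : Nat, (c, A) ∈ CS

/-- Hilbert-style derivability from axioms `Ax`, modus ponens, and axiom necessitation. -/
inductive Deriv (Ax : Fm → Prop) (CS : Set (Nat × Fm)) : Fm → Prop
  | ax {A : Fm} : Ax A → Deriv Ax CS A
  | mp {A B : Fm} : Deriv Ax CS (Fm.imp A B) → Deriv Ax CS A → Deriv Ax CS B
  | an {c : Nat} {A : Fm} (n : Nat) : (c, A) ∈ CS → Deriv Ax CS (anFm n (Tm.const c) A)

/-- A subset-model frame: worlds, normal worlds, valuation, evidence function. -/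
structure SModel where
  W : Type
  W0 : Set W
  V : W → Fm → Prop
  E : W → Tm → Set W

/-- Truth set [A]. -/
def SModel.ts (M : SModel) (A : Fm) : Set M.W := {w : M.W | M.V w A}

/-- APP_ω(s,t). -/
def SModel.APP (M : SModel) (ω : M.W) (s t : Tm) : Set Fm :=
  {F : Fm | ∃ H : Fm, M.E ω s ⊆ M.ts (Fm.imp H F) ∧ M.E ω t ⊆ M.ts H}

/-- The conditions common to general, D-arbitrary and NoC CS-subset models. -/
def CoreConds (CS : Set (Nat × Fm)) (M : SModel) : Prop :=
  M.W0.Nonempty ∧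
  ∀ ω ∈ M.W0,
    (¬ M.V ω Fm.bot) ∧
    (∀ F G : Fm, M.V ω (Fm.imp F G) ↔ (¬ M.V ω F ∨ M.V ω G)) ∧
    (∀ (t : Tm) (F : Fm), M.V ω (Fm.just t F) ↔ M.E ω t ⊆ M.ts F) ∧
    (∀ s t : Tm, M.E ω (Tm.sum s t) ⊆ M.E ω s ∩ M.E ω t) ∧
    (∀ s t : Tm, M.E ω (Tm.app s t) ⊆ {υ : M.W | ∀ F ∈ M.APP ω s t, υ ∈ M.ts F}) ∧
    (∀ (c : Nat) (A : Fm), (c, A) ∈ CS →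
      M.E ω (Tm.const c) ⊆ M.ts A ∧
      ∀ n : Nat, M.E ω (bangIter (n + 1) (Tm.const c)) ⊆ M.ts (anFm n (Tm.const c) A))

/-- General CS-subset model: every E(ω,t) meets the normal worlds. -/
def IsGeneralModel (CS : Set (Nat × Fm)) (M : SModel) : Prop :=
  CoreConds CS M ∧ ∀ ω ∈ M.W0, ∀ t : Tm, ∃ υ ∈ M.W0, υ ∈ M.E ω t

/-- D-arbitrary CS-subset model: every E(ω,t) meets W_{¬⊥}. -/
def IsDArbModel (CS : Set (Nat × Fm)) (M : SModel) : Prop :=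
  CoreConds CS M ∧ ∀ ω ∈ M.W0, ∀ t : Tm, ∃ υ : M.W, ¬ M.V υ Fm.bot ∧ υ ∈ M.E ω t

/-- NoC CS-subset model: every E(ω,t) meets W_nc. -/
def IsNoCModel (CS : Set (Nat × Fm)) (M : SModel) : Prop :=
  CoreConds CS M ∧ ∀ ω ∈ M.W0, ∀ t : Tm,
    ∃ υ : M.W, (∀ A : Fm, ¬ M.V υ A ∨ ¬ M.V υ (Fm.neg A)) ∧ υ ∈ M.E ω t

def GeneralValid (CS : Set (Nat × Fm)) (F : Fm) : Prop :=
  ∀ M : SModel, IsGeneralModel CS M → ∀ ω ∈ M.W0, M.V ω F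

def DArbValid (CS : Set (Nat × Fm)) (F : Fm) : Prop :=
  ∀ M : SModel, IsDArbModel CS M → ∀ ω ∈ M.W0, M.V ω F

def NoCValid (CS : Set (Nat × Fm)) (F : Fm) : Prop :=
  ∀ M : SModel, IsNoCModel CS M → ∀ ω ∈ M.W0, M.V ω F

/-- Γ is consistent: no finite list of members of Γ lets the logic derive ⊥
(i.e. A₁ → ... → Aₙ → ⊥ is not derivable for A₁,...,Aₙ ∈ Γ). -/
def ConsistentSet (Ax : Fm → Prop) (CS : Set (Nat × Fm)) (Γ : Set Fm) : Prop :=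
  ¬ ∃ L : List Fm, (∀ A ∈ L, A ∈ Γ) ∧ Deriv Ax CS (L.foldr Fm.imp Fm.bot)

/-- Maximal consistent: consistent and every proper superset is inconsistent. -/
def MaxConsistent (Ax : Fm → Prop) (CS : Set (Nat × Fm)) (Γ : Set Fm) : Prop :=
  ConsistentSet Ax CS Γ ∧ ∀ Δ : Set Fm, Γ ⊂ Δ → ¬ ConsistentSet Ax CS Δ

/-- The canonical model: worlds are arbitrary sets of formulas, normal worlds are
the maximal consistent sets, V^C(Γ,F)=1 iff F ∈ Γ, E^C(Γ,t) = {Δ : Δ ⊇ Γ/t}. -/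
def canonicalModel (Ax : Fm → Prop) (CS : Set (Nat × Fm)) : SModel where
  W := Set Fm
  W0 := {Γ : Set Fm | MaxConsistent Ax CS Γ}
  V := fun Γ F => F ∈ Γ
  E := fun Γ t => {Δ : Set Fm | {F : Fm | Fm.just t F ∈ Γ} ⊆ Δ}


deriving instance DecidableEq for Tm
deriving instance DecidableEq for Fm

section Aux

lemma foldr_sem (v : Fm → Bool) (hi : ∀ F G, v (Fm.imp F G) = (!(v F) || v G))
    (L : List Fm) (C : Fm) :
    v (L.foldr Fm.imp C) = true ↔ ((∀ A ∈ L, v A = true) → v C = true) := by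
  induction L with
  | nil => simp
  | cons A L ih =>
    simp only [List.foldr_cons, hi, List.mem_cons, Bool.or_eq_true, Bool.not_eq_true']
    constructor
    · rintro (hA | h) hall
      · exact absurd (hall A (Or.inl rfl)) (by simp [hA])
      · exact (ih.mp h) fun B hB => hall B (Or.inr hB)
    · intro h
      cases hA : v A with
      | false => exact Or.inl rfl
      | true =>
        refine Or.inr (ih.mpr fun hall => h ?_)
        rintro B (rfl | hB)
        · exact hA
        · exact hall B hB

lemma taut_id (A : Fm) : IsTaut (Fm.imp A A) := by
  intro v hb hi; simp [hi]

lemma taut_k (F G : Fm) : IsTaut (Fm.imp G (Fm.imp F G)) := by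
  intro v hb hi; simp [hi]; cases v G <;> cases v F <;> simp

lemma taut_neg_imp (F G : Fm) :
    IsTaut (Fm.imp (Fm.imp F Fm.bot) (Fm.imp F G)) := by
  intro v hb hi; simp [hi, hb]; cases v F <;> cases v G <;> simp

lemma taut_dne (F : Fm) :
    IsTaut (Fm.imp (Fm.imp (Fm.imp F Fm.bot) Fm.bot) F) := by
  intro v hb hi; simp only [hi, hb]; cases v F <;> simp

lemma taut_or1 (X Y : Fm) : IsTaut (Fm.imp X (Fm.disj X Y)) := by
  intro v hb hi; simp [Fm.disj, Fm.neg, hi, hb]; cases v X <;> cases v Y <;> simp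

lemma taut_or2 (X Y : Fm) : IsTaut (Fm.imp Y (Fm.disj X Y)) := by
  intro v hb hi; simp [Fm.disj, Fm.neg, hi, hb]; cases v X <;> cases v Y <;> simp

lemma taut_mp (L1 L2 : List Fm) (A B : Fm) :
    IsTaut (Fm.imp (L1.foldr Fm.imp (Fm.imp A B))
      (Fm.imp (L2.foldr Fm.imp A) ((L1 ++ L2).foldr Fm.imp B))) := by
  intro v hb hi
  rw [hi, hi]
  cases h1 : v (L1.foldr Fm.imp (Fm.imp A B)) with
  | false => simp
  | true =>
    cases h2 : v (L2.foldr Fm.imp A) with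
    | false => simp
    | true =>
      simp only [Bool.not_true, Bool.false_or]
      rw [foldr_sem v hi]
      intro hall
      have hAB := (foldr_sem v hi L1 _).mp h1 fun C hC => hall C (by simp [hC])
      have hA := (foldr_sem v hi L2 _).mp h2 fun C hC => hall C (by simp [hC])
      rw [hi] at hAB
      simpa [hA] using hAB

lemma taut_discharge (L L' : List Fm) (A : Fm) (h : ∀ B ∈ L, B = A ∨ B ∈ L') :
    IsTaut (Fm.imp (L.foldr Fm.imp Fm.bot) (L'.foldr Fm.imp (Fm.imp A Fm.bot))) := by
  intro v hb hi
  rw [hi]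
  cases h1 : v (L.foldr Fm.imp Fm.bot) with
  | false => simp
  | true =>
    simp only [Bool.not_true, Bool.false_or]
    rw [foldr_sem v hi]
    intro hall
    rw [hi]
    cases hA : v A with
    | false => simp
    | true =>
      have hb2 := (foldr_sem v hi L _).mp h1 fun B hB => by
        rcases h B hB with rfl | hB'
        · exact hA
        · exact hall B hB'
      simp [hb] at hb2

variable (CS : Set (Nat × Fm))

lemma der_taut {A : Fm} (h : IsTaut A) : Deriv JDAxiom CS A :=
  Deriv.ax (JDAxiom.cl h)

/-- Derivability from a set of premises. -/
def DF (Γ : Set Fm) (A : Fm) : Prop :=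
  ∃ L : List Fm, (∀ B ∈ L, B ∈ Γ) ∧ Deriv JDAxiom CS (L.foldr Fm.imp A)

variable {CS}

lemma DF.ofDeriv {Γ : Set Fm} {A : Fm} (h : Deriv JDAxiom CS A) : DF CS Γ A :=
  ⟨[], by simp, h⟩

lemma DF.ofMem {Γ : Set Fm} {A : Fm} (h : A ∈ Γ) : DF CS Γ A :=
  ⟨[A], by simpa using h, der_taut CS (taut_id A)⟩

lemma DF.mp {Γ : Set Fm} {A B : Fm} (h1 : DF CS Γ (Fm.imp A B)) (h2 : DF CS Γ A) :
    DF CS Γ B := by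
  obtain ⟨L1, hL1, d1⟩ := h1
  obtain ⟨L2, hL2, d2⟩ := h2
  refine ⟨L1 ++ L2, ?_, ?_⟩
  · intro B hB
    rcases List.mem_append.mp hB with hB | hB
    · exact hL1 B hB
    · exact hL2 B hB
  · exact Deriv.mp (Deriv.mp (der_taut CS (taut_mp L1 L2 A B)) d1) d2

lemma consistent_iff {Γ : Set Fm} :
    ConsistentSet JDAxiom CS Γ ↔ ¬ DF CS Γ Fm.bot := Iff.rfl

lemma mcs_not_mem_imp {Γ : Set Fm} (hΓ : MaxConsistent JDAxiom CS Γ) {A : Fm}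
    (hA : A ∉ Γ) : DF CS Γ (Fm.imp A Fm.bot) := by
  have hss : Γ ⊂ insert A Γ := Set.ssubset_insert hA
  have hinc := hΓ.2 _ hss
  rw [ConsistentSet, not_not] at hinc
  obtain ⟨L, hL, d⟩ := hinc
  refine ⟨L.filter (· ≠ A), ?_, ?_⟩
  · intro B hB
    have := List.mem_filter.mp hB
    rcases hL B this.1 with h | h
    · exact absurd h (by simpa using this.2)
    · exact h
  · refine Deriv.mp (der_taut CS (taut_discharge L _ A ?_)) d
    intro B hB
    by_cases hBA : B = A
    · exact Or.inl hBA
    · exact Or.inr (List.mem_filter.mpr ⟨hB, by simpa using hBA⟩)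

lemma mcs_df_mem {Γ : Set Fm} (hΓ : MaxConsistent JDAxiom CS Γ) {A : Fm}
    (h : DF CS Γ A) : A ∈ Γ := by
  by_contra hA
  exact hΓ.1 ((mcs_not_mem_imp hΓ hA).mp h)

lemma mcs_deriv_mem {Γ : Set Fm} (hΓ : MaxConsistent JDAxiom CS Γ) {A : Fm}
    (h : Deriv JDAxiom CS A) : A ∈ Γ :=
  mcs_df_mem hΓ (DF.ofDeriv h)

lemma mcs_mp_mem {Γ : Set Fm} (hΓ : MaxConsistent JDAxiom CS Γ) {A B : Fm}
    (h1 : Fm.imp A B ∈ Γ) (h2 : A ∈ Γ) : B ∈ Γ :=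
  mcs_df_mem hΓ ((DF.ofMem h1).mp (DF.ofMem h2))

lemma mcs_bot {Γ : Set Fm} (hΓ : MaxConsistent JDAxiom CS Γ) : Fm.bot ∉ Γ :=
  fun h => hΓ.1 (DF.ofMem h)

lemma mcs_imp_iff {Γ : Set Fm} (hΓ : MaxConsistent JDAxiom CS Γ) (F G : Fm) :
    Fm.imp F G ∈ Γ ↔ (F ∉ Γ ∨ G ∈ Γ) := by
  constructor
  · intro h
    by_cases hF : F ∈ Γ
    · exact Or.inr (mcs_mp_mem hΓ h hF)
    · exact Or.inl hF
  · rintro (hF | hG)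
    · have h1 : Fm.imp F Fm.bot ∈ Γ := mcs_df_mem hΓ (mcs_not_mem_imp hΓ hF)
      exact mcs_mp_mem hΓ (mcs_deriv_mem hΓ (der_taut CS (taut_neg_imp F G))) h1
    · exact mcs_mp_mem hΓ (mcs_deriv_mem hΓ (der_taut CS (taut_k F G))) hG

lemma chain_list {c : Set (Set Fm)} (hc : IsChain (· ⊆ ·) c) (hne : c.Nonempty)
    (L : List Fm) (h : ∀ A ∈ L, A ∈ ⋃₀ c) : ∃ s ∈ c, ∀ A ∈ L, A ∈ s := by
  induction L with
  | nil => exact ⟨hne.choose, hne.choose_spec, by simp⟩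
  | cons A L ih =>
    obtain ⟨s, hs, hLs⟩ := ih fun B hB => h B (List.mem_cons_of_mem _ hB)
    obtain ⟨t, ht, hAt⟩ := h A List.mem_cons_self
    rcases hc.total hs ht with hst | hts
    · refine ⟨t, ht, ?_⟩
      intro B hB
      rcases List.mem_cons.mp hB with rfl | hB
      · exact hAt
      · exact hst (hLs B hB)
    · refine ⟨s, hs, ?_⟩
      intro B hB
      rcases List.mem_cons.mp hB with rfl | hB
      · exact hts hAt
      · exact hLs B hB

lemma lindenbaum {Γ : Set Fm} (h : ConsistentSet JDAxiom CS Γ) :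
    ∃ Δ : Set Fm, Γ ⊆ Δ ∧ MaxConsistent JDAxiom CS Δ := by
  have hchain : ∀ c ⊆ {Δ : Set Fm | ConsistentSet JDAxiom CS Δ},
      IsChain (· ⊆ ·) c → c.Nonempty →
      ∃ ub ∈ {Δ : Set Fm | ConsistentSet JDAxiom CS Δ}, ∀ s ∈ c, s ⊆ ub := by
    intro c hcS hc hne
    refine ⟨⋃₀ c, ?_, fun s hs => Set.subset_sUnion_of_mem hs⟩
    rintro ⟨L, hL, d⟩
    obtain ⟨s, hs, hLs⟩ := chain_list hc hne L hL
    exact hcS hs ⟨L, hLs, d⟩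
  obtain ⟨m, hm, hmax⟩ :=
    zorn_subset_nonempty {Δ : Set Fm | ConsistentSet JDAxiom CS Δ} hchain Γ h
  refine ⟨m, hm, hmax.prop, ?_⟩
  intro Δ hΔ hcons
  exact hΔ.2 (hmax.2 hcons hΔ.1)

lemma canonical_isDArb
    (hne : ((canonicalModel JDAxiom CS).W0).Nonempty) :
    IsDArbModel CS (canonicalModel JDAxiom CS) := by
  have hjust : ∀ (Γ : Set Fm), MaxConsistent JDAxiom CS Γ → ∀ (t : Tm) (F : Fm),
      ((canonicalModel JDAxiom CS).V Γ (Fm.just t F) ↔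
        (canonicalModel JDAxiom CS).E Γ t ⊆ (canonicalModel JDAxiom CS).ts F) := by
    intro Γ _ t F
    constructor
    · intro h Δ hΔ
      exact hΔ h
    · intro h
      exact h (show {F : Fm | Fm.just t F ∈ Γ} ⊆ {F : Fm | Fm.just t F ∈ Γ} from
        Set.Subset.refl _)
  constructor
  · refine ⟨hne, ?_⟩
    intro Γ hΓ
    change Set Fm at Γ
    refine ⟨mcs_bot hΓ, ?_, hjust Γ hΓ, ?_, ?_, ?_⟩
    · intro F G
      exact (mcs_imp_iff hΓ F G)
    · -- sum
      intro s t Δ hΔ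
      constructor
      · intro F hF
        refine hΔ ?_
        have h1 : Fm.just (Tm.sum s t) F ∈ Γ := by
          have hax : Fm.disj (Fm.just s F) (Fm.just t F) ∈ Γ :=
            mcs_mp_mem hΓ (mcs_deriv_mem hΓ (der_taut CS (taut_or1 _ _))) hF
          exact mcs_mp_mem hΓ (mcs_deriv_mem hΓ (Deriv.ax (JDAxiom.jplus s t F))) hax
        exact h1
      · intro F hF
        refine hΔ ?_
        have hax : Fm.disj (Fm.just s F) (Fm.just t F) ∈ Γ :=
          mcs_mp_mem hΓ (mcs_deriv_mem hΓ (der_taut CS (taut_or2 _ _))) hF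
        exact mcs_mp_mem hΓ (mcs_deriv_mem hΓ (Deriv.ax (JDAxiom.jplus s t F))) hax
    · -- app
      intro s t Δ hΔ F hF
      obtain ⟨H, hs, ht⟩ := hF
      have h1 : Fm.just s (Fm.imp H F) ∈ Γ := (hjust Γ hΓ s _).mpr hs
      have h2 : Fm.just t H ∈ Γ := (hjust Γ hΓ t _).mpr ht
      have h3 : Fm.just (Tm.app s t) F ∈ Γ :=
        mcs_mp_mem hΓ (mcs_mp_mem hΓ
          (mcs_deriv_mem hΓ (Deriv.ax (JDAxiom.j s t H F))) h1) h2
      exact hΔ h3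
    · -- constant specification
      intro c A hcA
      constructor
      · intro Δ hΔ
        exact hΔ (mcs_deriv_mem hΓ (Deriv.an (c := c) 0 hcA))
      · intro n Δ hΔ
        have : anFm (n + 1) (Tm.const c) A ∈ Γ :=
          mcs_deriv_mem hΓ (Deriv.an (c := c) (n + 1) hcA)
        exact hΔ this
  · -- D-arbitrary condition
    intro Γ hΓ t
    change Set Fm at Γ
    refine ⟨{F : Fm | Fm.just t F ∈ Γ}, ?_, Set.Subset.refl _⟩
    intro hb
    have hjd : Fm.neg (Fm.just t Fm.bot) ∈ Γ :=
      mcs_deriv_mem hΓ (Deriv.ax (JDAxiom.jd t))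
    exact mcs_bot hΓ (mcs_mp_mem hΓ hjd hb)

end Aux

/-- Completeness of JD_CS with respect to D-arbitrary CS-subset models, for arbitrary CS. -/
theorem stmt_4 (CS : Set (Nat × Fm)) (hCS : IsConstSpec JDAxiom CS)
    (F : Fm) (h : DArbValid CS F) :
    Deriv JDAxiom CS F := by
  by_contra hF
  have hcons : ConsistentSet JDAxiom CS {Fm.neg F} := by
    rintro ⟨L, hL, d⟩
    have ht : Deriv JDAxiom CS
        (Fm.imp (L.foldr Fm.imp Fm.bot)
          (([] : List Fm).foldr Fm.imp (Fm.imp (Fm.neg F) Fm.bot))) :=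
      der_taut CS (taut_discharge L [] (Fm.neg F) fun B hB => Or.inl (hL B hB))
    have d2 : Deriv JDAxiom CS (Fm.imp (Fm.imp F Fm.bot) Fm.bot) := Deriv.mp ht d
    exact hF (Deriv.mp (der_taut CS (taut_dne F)) d2)
  obtain ⟨Γ, hsub, hΓ⟩ := lindenbaum hcons
  have hne : ((canonicalModel JDAxiom CS).W0).Nonempty := ⟨Γ, hΓ⟩
  have hV : (canonicalModel JDAxiom CS).V Γ F :=
    h _ (canonical_isDArb hne) Γ hΓ
  have hneg : Fm.neg F ∈ Γ := hsub rfl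
  exact mcs_bot hΓ (mcs_mp_mem hΓ hneg hV)
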